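/- If H is a distribution function on (0,∞) with H(0)=0 that is regularly varying at 0 with index γ ∈ (0, α), and S ~ Beta(α,β) is independent of R ~ H, then the df H_{α,β} of W = RS satisfies lim_{x↓0} H_{α,β}(x)/H(x) = Γ(α+β)Γ(α−γ)/(Γ(α)Γ(α+β−γ)); in particular H_{α,β} is regularly varying at 0 with index γ. -/

import Mathlib

open MeasureTheory ProbabilityTheory Real Filter Topology Set
open scoped ENNReal

/-- Density (w.r.t. Lebesgue measure) of the Beta(a,b) distribution. -/
noncomputable def betaPDF (a b : ℝ) (x : ℝ) : ℝ≥0∞ :=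
  if x ∈ Set.Ioo (0 : ℝ) 1 then
    ENNReal.ofReal (Real.Gamma (a + b) / (Real.Gamma a * Real.Gamma b)
      * x ^ (a - 1) * (1 - x) ^ (b - 1))
  else 0

/-- A function `F` is regularly varying at `0` with index `γ`. -/
def RegVarAt0 (F : ℝ → ℝ) (γ : ℝ) : Prop :=
  ∀ t : ℝ, 0 < t →
    Filter.Tendsto (fun x => F (t * x) / F x) (nhdsWithin 0 (Set.Ioi 0)) (nhds (t ^ γ))

lemma measurable_betaPDF (a b : ℝ) : Measurable (_root_.betaPDF a b) := by
  unfold _root_.betaPDF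
  exact Measurable.ite measurableSet_Ioo
    (ENNReal.measurable_ofReal.comp (by fun_prop)) measurable_const

lemma realBeta_integrableOn {a b : ℝ} (ha : 0 < a) (hb : 0 < b) :
    IntegrableOn (fun x => x ^ (a - 1) * (1 - x) ^ (b - 1)) (Ioo (0:ℝ) 1) := by
  have h := (Complex.betaIntegral_convergent (u := (a:ℂ)) (v := (b:ℂ)) (by simpa) (by simpa)).norm
  rw [intervalIntegrable_iff] at h
  have h2 : IntegrableOn (fun x : ℝ => ‖(x:ℂ) ^ ((a:ℂ) - 1) * (1 - (x:ℂ)) ^ ((b:ℂ) - 1)‖)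
      (Ioo (0:ℝ) 1) := h.mono_set (by rw [uIoc_of_le zero_le_one]; exact Ioo_subset_Ioc_self)
  refine (integrableOn_congr_fun (fun x hx => ?_) measurableSet_Ioo).mp h2
  obtain ⟨hx0, hx1⟩ := hx
  have e1 : ((1:ℂ) - (x:ℂ)) = ((1 - x : ℝ) : ℂ) := by push_cast; ring
  rw [norm_mul, e1,
    Complex.norm_cpow_eq_rpow_re_of_pos hx0,
    Complex.norm_cpow_eq_rpow_re_of_pos (by linarith : (0:ℝ) < 1 - x)]
  norm_num [Complex.sub_re]

lemma realBeta_integral {a b : ℝ} (ha : 0 < a) (hb : 0 < b) :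
    ∫ x in Ioo (0:ℝ) 1, x ^ (a - 1) * (1 - x) ^ (b - 1) =
      Real.Gamma a * Real.Gamma b / Real.Gamma (a + b) := by
  have hG := Complex.Gamma_mul_Gamma_eq_betaIntegral (s := (a:ℂ)) (t := (b:ℂ))
    (by simpa) (by simpa)
  have hB : Complex.betaIntegral (a:ℂ) (b:ℂ)
      = ((∫ x in Ioo (0:ℝ) 1, x ^ (a - 1) * (1 - x) ^ (b - 1) : ℝ) : ℂ) := by
    rw [Complex.betaIntegral, intervalIntegral.integral_of_le zero_le_one,
      integral_Ioc_eq_integral_Ioo]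
    rw [setIntegral_congr_fun (f := fun x : ℝ => (x:ℂ) ^ ((a:ℂ) - 1) * (1 - (x:ℂ)) ^ ((b:ℂ) - 1))
      (g := fun x : ℝ => ((x ^ (a - 1) * (1 - x) ^ (b - 1) : ℝ) : ℂ))
      measurableSet_Ioo (fun x hx => ?_)]
    · exact integral_ofReal
    obtain ⟨hx0, hx1⟩ := hx
    have e1 : ((1:ℂ) - (x:ℂ)) = ((1 - x : ℝ) : ℂ) := by push_cast; ring
    have e2 : ((a:ℂ) - 1) = ((a - 1 : ℝ) : ℂ) := by push_cast; ring
    have e3 : ((b:ℂ) - 1) = ((b - 1 : ℝ) : ℂ) := by push_cast; ring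
    simp only []
    rw [e1, e2, e3, ← Complex.ofReal_cpow hx0.le, ← Complex.ofReal_cpow (by linarith)]
    push_cast
    ring
  rw [hB, Complex.Gamma_ofReal, Complex.Gamma_ofReal, ← Complex.ofReal_add a b,
    Complex.Gamma_ofReal, ← Complex.ofReal_mul, ← Complex.ofReal_mul] at hG
  have := Complex.ofReal_inj.mp hG
  have hGab : Real.Gamma (a + b) ≠ 0 := (Real.Gamma_pos_of_pos (by linarith)).ne'
  field_simp
  linarith [this]

lemma potter_pow {H : ℝ → ℝ} {ρ δ : ℝ} (hmono : Monotone H)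
    (hstep : ∀ x, 0 < x → x ≤ δ → H (2 * x) ≤ 2 ^ ρ * H x) :
    ∀ n : ℕ, ∀ x : ℝ, 0 < x → 2 ^ n * x ≤ 2 * δ → H (2 ^ n * x) ≤ (2 ^ ρ) ^ n * H x := by
  intro n
  induction n with
  | zero => intro x hx _; simp
  | succ n ih =>
    intro x hx h2
    have hpow : (0:ℝ) < 2 ^ n := by positivity
    have hx2 : (0:ℝ) < 2 ^ n * x := by positivity
    have hle : 2 ^ n * x ≤ δ := by
      have : (2:ℝ) ^ (n+1) * x = 2 * (2 ^ n * x) := by ring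
      nlinarith [this ▸ h2]
    have h1 := hstep (2 ^ n * x) hx2 hle
    have h2' := ih x hx (by linarith)
    have hρpos : (0:ℝ) < 2 ^ ρ := Real.rpow_pos_of_pos two_pos ρ
    have he : (2:ℝ) ^ (n+1) * x = 2 * (2 ^ n * x) := by ring
    calc H (2 ^ (n+1) * x) = H (2 * (2 ^ n * x)) := by rw [he]
      _ ≤ 2 ^ ρ * H (2 ^ n * x) := h1
      _ ≤ 2 ^ ρ * ((2 ^ ρ) ^ n * H x) := by
          exact mul_le_mul_of_nonneg_left h2' hρpos.le
      _ = (2 ^ ρ) ^ (n+1) * H x := by ring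

lemma potter_chain {H : ℝ → ℝ} {ρ δ : ℝ} (hρ : 0 ≤ ρ) (hmono : Monotone H)
    (hnn : ∀ x, 0 ≤ H x)
    (hstep : ∀ x, 0 < x → x ≤ δ → H (2 * x) ≤ 2 ^ ρ * H x) :
    ∀ x y, 0 < x → x ≤ y → y ≤ δ → H y ≤ 2 ^ ρ * (y / x) ^ ρ * H x := by
  intro x y hx hxy hyδ
  have hy : 0 < y := lt_of_lt_of_le hx hxy
  have hρ2 : (1:ℝ) ≤ 2 ^ ρ := by
    calc (1:ℝ) = 1 ^ ρ := (Real.one_rpow ρ).symm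
      _ ≤ 2 ^ ρ := Real.rpow_le_rpow zero_le_one one_le_two hρ
  have hex : ∃ n : ℕ, y ≤ 2 ^ n * x := by
    obtain ⟨n, hn⟩ := pow_unbounded_of_one_lt (y / x) (one_lt_two (α := ℝ))
    exact ⟨n, by rw [div_lt_iff₀ hx] at hn; linarith⟩
  have hn := Nat.find_spec hex
  rcases Nat.eq_zero_or_pos (Nat.find hex) with h0 | hposn
  · rw [h0] at hn
    simp only [pow_zero, one_mul] at hn
    have hxe : y = x := le_antisymm hn hxy
    subst hxe
    have h1 : (y / y) ^ ρ = 1 := by rw [div_self hy.ne']; exact Real.one_rpow ρ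
    rw [h1, mul_one]
    nlinarith [hnn y]
  · set n := Nat.find hex with hdefn
    obtain ⟨m, hm⟩ : ∃ m, n = m + 1 := ⟨n - 1, (Nat.succ_pred_eq_of_pos hposn).symm⟩
    have hmlt : ¬ y ≤ 2 ^ m * x := Nat.find_min hex (by omega)
    push_neg at hmlt
    have h2n : (2:ℝ) ^ n * x ≤ 2 * δ := by
      have : (2:ℝ) ^ n * x = 2 * (2 ^ m * x) := by rw [hm]; ring
      rw [this]; nlinarith
    have hHy : H y ≤ (2 ^ ρ) ^ n * H x :=
      le_trans (hmono hn) (potter_pow hmono hstep n x hx h2n)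
    have hbound : ((2:ℝ) ^ ρ) ^ n ≤ 2 ^ ρ * (y / x) ^ ρ := by
      have h2n' : (2:ℝ) ^ n ≤ 2 * (y / x) := by
        have : (2:ℝ) ^ n * x = 2 * (2 ^ m * x) := by rw [hm]; ring
        rw [show (2:ℝ) * (y / x) = 2 * y / x by ring, le_div_iff₀ hx]
        nlinarith
      calc ((2:ℝ) ^ ρ) ^ n = ((2:ℝ) ^ n : ℝ) ^ ρ := by
            rw [← Real.rpow_natCast (2 ^ ρ) n, ← Real.rpow_mul (by norm_num),
              mul_comm, Real.rpow_mul (by norm_num), Real.rpow_natCast]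
        _ ≤ (2 * (y / x)) ^ ρ := Real.rpow_le_rpow (by positivity) h2n' hρ
        _ = 2 ^ ρ * (y / x) ^ ρ := Real.mul_rpow (by norm_num) (by positivity)
    nlinarith [hnn x, Real.rpow_pos_of_pos (show (0:ℝ) < y/x by positivity) ρ]


set_option maxHeartbeats 1000000 in
theorem beta_product_df_ratio_limit
    {Ω : Type*} [MeasurableSpace Ω] (P : Measure Ω) [IsProbabilityMeasure P]
    (α β γ : ℝ) (hα : 0 < α) (hβ : 0 < β) (hγ : 0 < γ) (hγα : γ < α)
    (R S : Ω → ℝ) (hR : Measurable R) (hS : Measurable S)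
    (hRpos : ∀ᵐ ω ∂P, 0 < R ω)
    (hind : IndepFun R S P)
    (hSlaw : Measure.map S P = volume.withDensity (_root_.betaPDF α β))
    (H Hab : ℝ → ℝ)
    (hH : ∀ x, H x = (P {ω | R ω ≤ x}).toReal)
    (hHab : ∀ x, Hab x = (P {ω | R ω * S ω ≤ x}).toReal)
    (hHrv : RegVarAt0 H γ) :
    Filter.Tendsto (fun x => Hab x / H x) (nhdsWithin 0 (Set.Ioi 0))
      (nhds (Real.Gamma (α + β) * Real.Gamma (α - γ) /
        (Real.Gamma α * Real.Gamma (α + β - γ))))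
    ∧ RegVarAt0 Hab γ := by
  set ν : Measure ℝ := volume.withDensity (_root_.betaPDF α β) with hνdef
  set c : ℝ := Real.Gamma (α + β) * Real.Gamma (α - γ) /
      (Real.Gamma α * Real.Gamma (α + β - γ)) with hcdef
  have hGab : 0 < Real.Gamma (α + β) := Real.Gamma_pos_of_pos (by linarith)
  have hGa : 0 < Real.Gamma α := Real.Gamma_pos_of_pos hα
  have hGb : 0 < Real.Gamma β := Real.Gamma_pos_of_pos hβ
  have hGag : 0 < Real.Gamma (α - γ) := Real.Gamma_pos_of_pos (by linarith)
  have hGabg : 0 < Real.Gamma (α + β - γ) := Real.Gamma_pos_of_pos (by linarith)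
  have hcpos : 0 < c := by positivity
  -- basic facts about H
  have hHnn : ∀ x, 0 ≤ H x := fun x => by rw [hH]; exact ENNReal.toReal_nonneg
  have hHub : ∀ x, H x ≤ 1 := by
    intro x; rw [hH]
    exact ENNReal.toReal_le_of_le_ofReal zero_le_one (by simpa using prob_le_one)
  have hHmono : Monotone H := by
    intro x y hxy
    rw [hH, hH]
    exact ENNReal.toReal_mono (measure_ne_top P _)
      (measure_mono (fun ω hω => le_trans hω hxy))
  have hHmeas : Measurable H := hHmono.measurable
  haveI hνprob : IsProbabilityMeasure ν := by
    rw [← hSlaw]; exact Measure.isProbabilityMeasure_map hS.aemeasurable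
  haveI : IsProbabilityMeasure (Measure.map R P) := Measure.isProbabilityMeasure_map hR.aemeasurable
  have hνsupp : ∀ᵐ s ∂ν, s ∈ Ioo (0:ℝ) 1 := by
    have h0 : ν (Ioo (0:ℝ) 1)ᶜ = 0 := by
      rw [hνdef, withDensity_apply _ measurableSet_Ioo.compl,
        setLIntegral_congr_fun (g := fun _ => 0) measurableSet_Ioo.compl
          (fun x hx => by
            show _root_.betaPDF α β x = 0
            unfold _root_.betaPDF
            exact if_neg hx), lintegral_zero]
    rw [ae_iff]
    have he : {a : ℝ | ¬ a ∈ Ioo (0:ℝ) 1} = (Ioo (0:ℝ) 1)ᶜ := rfl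
    rw [he]
    exact h0
  have hμIic : ∀ y : ℝ, Measure.map R P (Iic y) = ENNReal.ofReal (H y) := by
    intro y
    rw [Measure.map_apply hR measurableSet_Iic, hH]
    exact (ENNReal.ofReal_toReal (measure_ne_top P _)).symm
  have hpair : Measure.map (fun ω => (S ω, R ω)) P = ν.prod (Measure.map R P) := by
    have h := (indepFun_iff_map_prod_eq_prod_map_map hS.aemeasurable hR.aemeasurable).mp hind.symm
    rw [hSlaw] at h; exact h
  have hrep : ∀ x : ℝ, Hab x = ∫ s, H (x / s) ∂ν := by
    intro x
    have hms : MeasurableSet {p : ℝ × ℝ | p.2 * p.1 ≤ x} :=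
      measurableSet_le (measurable_snd.mul measurable_fst) measurable_const
    have h1 : P {ω | R ω * S ω ≤ x}
        = Measure.map (fun ω => (S ω, R ω)) P {p : ℝ × ℝ | p.2 * p.1 ≤ x} := by
      rw [Measure.map_apply (hS.prodMk hR) hms]; rfl
    have h2 : Measure.map (fun ω => (S ω, R ω)) P {p : ℝ × ℝ | p.2 * p.1 ≤ x}
        = ∫⁻ s, (Measure.map R P) {r : ℝ | r * s ≤ x} ∂ν := by
      rw [hpair, Measure.prod_apply hms]; rfl
    have h3 : ∫⁻ s, (Measure.map R P) {r : ℝ | r * s ≤ x} ∂ν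
        = ∫⁻ s, ENNReal.ofReal (H (x / s)) ∂ν := by
      refine lintegral_congr_ae ?_
      filter_upwards [hνsupp] with s hs
      have hs0 := hs.1
      have he : {r : ℝ | r * s ≤ x} = Iic (x / s) := by
        ext r; simp [mem_Iic, le_div_iff₀ hs0]
      rw [he, hμIic]
    have h4int : Integrable (fun s => H (x / s)) ν :=
      ⟨(hHmeas.comp (measurable_const.div measurable_id)).aestronglyMeasurable,
        HasFiniteIntegral.of_bounded (C := 1) (ae_of_all _ fun s => by
          rw [Real.norm_eq_abs, abs_of_nonneg (hHnn _)]; exact hHub _)⟩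
    have h4 : ∫⁻ s, ENNReal.ofReal (H (x / s)) ∂ν = ENNReal.ofReal (∫ s, H (x / s) ∂ν) :=
      (ofReal_integral_eq_lintegral_ofReal h4int (ae_of_all _ fun s => hHnn _)).symm
    rw [hHab, h1, h2, h3, h4, ENNReal.toReal_ofReal (integral_nonneg fun s => hHnn _)]
  have heq : ∀ x : ℝ, Hab x / H x = ∫ s, H (x / s) / H x ∂ν := by
    intro x; rw [hrep x, integral_div]
  have hmom : ∀ p : ℝ, p < α → Integrable (fun s => s ^ (-p)) ν ∧
      ∫ s, s ^ (-p) ∂ν = Real.Gamma (α + β) * Real.Gamma (α - p) /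
        (Real.Gamma α * Real.Gamma (α + β - p)) := by
    intro p hp
    have hap : 0 < α - p := by linarith
    have hGap : 0 < Real.Gamma (α - p) := Real.Gamma_pos_of_pos hap
    have hGabp : 0 < Real.Gamma (α + β - p) := Real.Gamma_pos_of_pos (by linarith)
    set k : ℝ := Real.Gamma (α + β) / (Real.Gamma α * Real.Gamma β) with hk
    have hknn : 0 ≤ k := by positivity
    set g : ℝ → ℝ := fun x => k * (x ^ (α - p - 1) * (1 - x) ^ (β - 1)) with hgdef
    have hfin : ∀ᵐ x ∂(volume : Measure ℝ), _root_.betaPDF α β x < ∞ := by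
      refine ae_of_all _ (fun x => ?_)
      unfold _root_.betaPDF
      split
      · exact ENNReal.ofReal_lt_top
      · simp
    have hfun : (fun x : ℝ => x ^ (-p) * (_root_.betaPDF α β x).toReal)
        = (Ioo (0:ℝ) 1).indicator g := by
      funext x
      by_cases hx : x ∈ Ioo (0:ℝ) 1
      · obtain ⟨hx0, hx1⟩ := hx
        have hmem : x ∈ Ioo (0:ℝ) 1 := ⟨hx0, hx1⟩
        rw [indicator_of_mem hmem g]
        simp only [_root_.betaPDF, if_pos hmem, hgdef]
        have hnn0 : (0:ℝ) ≤ Real.Gamma (α + β) / (Real.Gamma α * Real.Gamma β)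
            * x ^ (α - 1) * (1 - x) ^ (β - 1) :=
          mul_nonneg (mul_nonneg (div_nonneg hGab.le (mul_nonneg hGa.le hGb.le))
            (Real.rpow_nonneg hx0.le _)) (Real.rpow_nonneg (by linarith) _)
        rw [ENNReal.toReal_ofReal hnn0, hk,
          show α - p - 1 = -p + (α - 1) by ring, Real.rpow_add hx0]
        ring
      · rw [indicator_of_notMem hx]
        simp [_root_.betaPDF, hx]
    have hint : Integrable (fun s => s ^ (-p)) ν := by
      rw [hνdef, integrable_withDensity_iff (_root_.measurable_betaPDF α β) hfin]
      rw [hfun, integrable_indicator_iff measurableSet_Ioo]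
      exact (realBeta_integrableOn hap hβ).const_mul k
    refine ⟨hint, ?_⟩
    have hνeq : ν = volume.withDensity (fun x => ((_root_.betaPDF α β x).toNNReal : ℝ≥0∞)) := by
      rw [hνdef]; congr 1; funext x
      exact (ENNReal.coe_toNNReal (by
        unfold _root_.betaPDF; split
        · exact ENNReal.ofReal_ne_top
        · simp)).symm
    rw [hνeq, integral_withDensity_eq_integral_smul (_root_.measurable_betaPDF α β).ennreal_toNNReal]
    have hsm : (fun x : ℝ => (_root_.betaPDF α β x).toNNReal • x ^ (-p))
        = (Ioo (0:ℝ) 1).indicator g := by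
      rw [← hfun]; funext x
      rw [NNReal.smul_def, smul_eq_mul, mul_comm]
      rfl
    rw [hsm, integral_indicator measurableSet_Ioo, hgdef]
    rw [integral_const_mul, realBeta_integral hap hβ, hk]
    field_simp
    ring
  -- eventual positivity and Potter bounds
  set ρ : ℝ := (α + γ) / 2 with hρdef
  have hγρ : γ < ρ := by rw [hρdef]; linarith
  have hρα : ρ < α := by rw [hρdef]; linarith
  have hρpos : 0 < ρ := by rw [hρdef]; linarith
  obtain ⟨δ₁, hδ₁pos, hδ₁⟩ : ∃ δ₁ > 0, ∀ x, 0 < x → x < δ₁ →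
      0 < H x ∧ H (2 * x) ≤ 2 ^ ρ * H x := by
    have h2γ := hHrv 2 two_pos
    have hev1 : ∀ᶠ x in nhdsWithin (0:ℝ) (Set.Ioi 0), 0 < H (2 * x) / H x :=
      h2γ.eventually_const_lt (Real.rpow_pos_of_pos two_pos γ)
    have hev2 : ∀ᶠ x in nhdsWithin (0:ℝ) (Set.Ioi 0), H (2 * x) / H x < 2 ^ ρ :=
      h2γ.eventually_lt_const ((Real.rpow_lt_rpow_left_iff one_lt_two).mpr hγρ)
    obtain ⟨u, hu, hsub⟩ := mem_nhdsGT_iff_exists_Ioo_subset.mp (hev1.and hev2)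
    refine ⟨u, hu, fun x hx hxu => ?_⟩
    obtain ⟨e1, e2⟩ := hsub ⟨hx, hxu⟩
    have hHx : 0 < H x := by
      rcases (hHnn x).lt_or_eq with h | h
      · exact h
      · exfalso; rw [← h, div_zero] at e1; exact lt_irrefl 0 e1
    exact ⟨hHx, le_of_lt ((div_lt_iff₀ hHx).mp e2)⟩
  have hHpos : ∀ x : ℝ, 0 < x → 0 < H x := by
    intro x hx
    have h1 : 0 < min x (δ₁ / 2) := lt_min hx (by linarith)
    exact lt_of_lt_of_le ((hδ₁ _ h1 (lt_of_le_of_lt (min_le_right _ _) (by linarith))).1)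
      (hHmono (min_le_left _ _))
  set δ : ℝ := δ₁ / 2 with hδdef
  have hδpos : 0 < δ := by rw [hδdef]; linarith
  have hstep : ∀ x, 0 < x → x ≤ δ → H (2 * x) ≤ 2 ^ ρ * H x := by
    intro x hx hxδ
    exact (hδ₁ x hx (by rw [hδdef] at hxδ; linarith)).2
  have hpott := potter_chain hρpos.le hHmono hHnn hstep
  set c₀ : ℝ := H δ * 2 ^ (-ρ) * δ ^ (-ρ) with hc₀def
  have hc₀pos : 0 < c₀ := by
    have := hHpos δ hδpos
    have h1 : (0:ℝ) < 2 ^ (-ρ) := Real.rpow_pos_of_pos two_pos _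
    have h2 : (0:ℝ) < δ ^ (-ρ) := Real.rpow_pos_of_pos hδpos _
    positivity
  have hlow : ∀ x, 0 < x → x ≤ δ → c₀ * x ^ ρ ≤ H x := by
    intro x hx hxδ
    have h := hpott x δ hx hxδ le_rfl
    have hA : (0:ℝ) < 2 ^ ρ := Real.rpow_pos_of_pos two_pos ρ
    have hB : (0:ℝ) < δ ^ ρ := Real.rpow_pos_of_pos hδpos ρ
    have hX : (0:ℝ) < x ^ ρ := Real.rpow_pos_of_pos hx ρ
    have hδx : (δ / x) ^ ρ = δ ^ ρ / x ^ ρ := Real.div_rpow hδpos.le hx.le ρ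
    rw [hδx] at h
    have h' : H δ * x ^ ρ ≤ 2 ^ ρ * δ ^ ρ * H x := by
      have h2 := mul_le_mul_of_nonneg_right h hX.le
      calc H δ * x ^ ρ ≤ 2 ^ ρ * (δ ^ ρ / x ^ ρ) * H x * x ^ ρ := h2
        _ = 2 ^ ρ * δ ^ ρ * H x := by field_simp
    have he : c₀ * x ^ ρ = (H δ * x ^ ρ) / (2 ^ ρ * δ ^ ρ) := by
      rw [hc₀def, Real.rpow_neg (by norm_num : (0:ℝ) ≤ 2), Real.rpow_neg hδpos.le]
      field_simp
    rw [he, div_le_iff₀ (by positivity)]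
    nlinarith [hHnn x]
  set C : ℝ := max (2 ^ ρ) (δ ^ (-ρ) / c₀) with hCdef
  have hdom : ∀ x, 0 < x → x ≤ δ → ∀ s, s ∈ Ioo (0:ℝ) 1 →
      H (x / s) / H x ≤ C * s ^ (-ρ) := by
    intro x hx hxδ s hs
    obtain ⟨hs0, hs1⟩ := hs
    have hHx := hHpos x hx
    have hsρ : (0:ℝ) < s ^ (-ρ) := Real.rpow_pos_of_pos hs0 _
    by_cases hcase : x / s ≤ δ
    · have hxs : x ≤ x / s := by
        rw [le_div_iff₀ hs0]; nlinarith
      have h := hpott x (x / s) hx hxs hcase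
      have he : ((x / s) / x) ^ ρ = s ^ (-ρ) := by
        have hq : (x / s) / x = s⁻¹ := by field_simp
        rw [hq, Real.inv_rpow hs0.le, ← Real.rpow_neg hs0.le]
      rw [he] at h
      rw [div_le_iff₀ hHx]
      calc H (x / s) ≤ 2 ^ ρ * s ^ (-ρ) * H x := h
        _ ≤ C * s ^ (-ρ) * H x :=
            mul_le_mul_of_nonneg_right
              (mul_le_mul_of_nonneg_right (le_max_left _ _) hsρ.le) hHx.le
    · push_neg at hcase
      have hδs : δ * s < x := (lt_div_iff₀ hs0).mp hcase
      have hge : c₀ * (δ * s) ^ ρ ≤ H x := by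
        refine le_trans ?_ (hlow x hx hxδ)
        exact mul_le_mul_of_nonneg_left
          (Real.rpow_le_rpow (by positivity) hδs.le hρpos.le) hc₀pos.le
      have hpos2 : (0:ℝ) < c₀ * (δ * s) ^ ρ := by
        have : (0:ℝ) < (δ * s) ^ ρ := Real.rpow_pos_of_pos (by positivity) ρ
        positivity
      have h1 : H (x / s) / H x ≤ 1 / (c₀ * (δ * s) ^ ρ) :=
        div_le_div₀ zero_le_one (hHub _) hpos2 hge
      have h2 : 1 / (c₀ * (δ * s) ^ ρ) = (δ ^ (-ρ) / c₀) * s ^ (-ρ) := by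
        rw [Real.mul_rpow hδpos.le hs0.le, Real.rpow_neg hδpos.le, Real.rpow_neg hs0.le]
        have hBp : (0:ℝ) < δ ^ ρ := Real.rpow_pos_of_pos hδpos ρ
        have hSp : (0:ℝ) < s ^ ρ := Real.rpow_pos_of_pos hs0 ρ
        field_simp
      refine le_trans h1 ?_
      rw [h2]
      have := le_max_right (2 ^ ρ) (δ ^ (-ρ) / c₀)
      nlinarith
  -- the key dominated convergence step
  have key : Tendsto (fun x => ∫ s, H (x / s) / H x ∂ν) (nhdsWithin 0 (Set.Ioi 0))
      (nhds (∫ s, s ^ (-γ) ∂ν)) := by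
    refine tendsto_integral_filter_of_dominated_convergence (bound := fun s => C * s ^ (-ρ))
      ?_ ?_ ?_ ?_
    · exact Eventually.of_forall fun x =>
        ((hHmeas.comp (measurable_const.div measurable_id)).div_const _).aestronglyMeasurable
    · have hmem : Ioc (0:ℝ) δ ∈ nhdsWithin (0:ℝ) (Set.Ioi 0) :=
        Ioc_mem_nhdsGT_of_mem ⟨le_refl 0, hδpos⟩
      filter_upwards [hmem] with x hx
      filter_upwards [hνsupp] with s hs
      rw [Real.norm_eq_abs, abs_of_nonneg (div_nonneg (hHnn _) (hHnn _))]
      exact hdom x hx.1 hx.2 s hs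
    · exact ((hmom ρ hρα).1).const_mul C
    · filter_upwards [hνsupp] with s hs
      obtain ⟨hs0, hs1⟩ := hs
      have h := hHrv (1 / s) (by positivity)
      have hlimv : (1 / s) ^ γ = s ^ (-γ) := by
        rw [one_div, Real.inv_rpow hs0.le, ← Real.rpow_neg hs0.le]
      rw [← hlimv]
      exact h.congr (fun x => by rw [one_div_mul_eq_div])
  have hval : ∫ s, s ^ (-γ) ∂ν = c := (hmom γ hγα).2
  have main : Tendsto (fun x => Hab x / H x) (nhdsWithin 0 (Set.Ioi 0)) (nhds c) := by
    rw [← hval]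
    exact key.congr (fun x => (heq x).symm)
  refine ⟨main, ?_⟩
  -- regular variation of Hab
  intro t ht
  have hmap : Tendsto (fun x : ℝ => t * x) (nhdsWithin 0 (Set.Ioi 0))
      (nhdsWithin 0 (Set.Ioi 0)) := by
    rw [tendsto_nhdsWithin_iff]
    constructor
    · have h : Tendsto (fun x : ℝ => t * x) (nhds 0) (nhds (t * 0)) :=
        (continuous_const.mul continuous_id).tendsto 0
      rw [mul_zero] at h
      exact h.mono_left nhdsWithin_le_nhds
    · exact eventually_mem_nhdsWithin.mono (fun x hx => mul_pos ht hx)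
  have h1 : Tendsto (fun x => Hab (t * x) / H (t * x)) (nhdsWithin 0 (Set.Ioi 0)) (nhds c) :=
    main.comp hmap
  have h2 := hHrv t ht
  have h3 : Tendsto (fun x => H x / Hab x) (nhdsWithin 0 (Set.Ioi 0)) (nhds c⁻¹) := by
    have := main.inv₀ hcpos.ne'
    refine this.congr (fun x => ?_)
    rw [inv_div]
  have hprod := (h1.mul h2).mul h3
  have hev : ∀ᶠ x in nhdsWithin 0 (Set.Ioi 0),
      Hab (t * x) / H (t * x) * (H (t * x) / H x) * (H x / Hab x) = Hab (t * x) / Hab x := by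
    filter_upwards [eventually_mem_nhdsWithin] with x hx
    have hx0 : (0:ℝ) < x := hx
    have h1 : H (t * x) ≠ 0 := (hHpos _ (mul_pos ht hx0)).ne'
    have h2 : H x ≠ 0 := (hHpos x hx0).ne'
    rcases eq_or_ne (Hab x) 0 with h | h
    · simp [h]
    · field_simp
  have : c * t ^ γ * c⁻¹ = t ^ γ := by field_simp
  rw [this] at hprod
  exact hprod.congr' hev
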